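/- In a finite bipartite graph, if M and N are two matchings, then every connected component of the symmetric difference M Δ N (viewed as a graph on the matched vertices) is either a path or an even cycle whose edges alternate between M and N; consequently, if |N| > |M| then some component contains strictly more N-edges than M-edges and is an M-augmenting path. -/

import Mathlib

open SimpleGraph

private theorem alt_head_last : ∀ (bs : List Bool), bs.Chain' (· ≠ ·) →
    ∀ b : Bool, bs.count (!b) < bs.count b → bs.head? = some b ∧ bs.getLast? = some b
  | [], _, b, h => by simp at h
  | [a], _, b, h => by
      have hab : a = b := by cases a <;> cases b <;> simp_all
      subst hab; simp
  | a :: c :: t, hch, b, h => by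
      obtain ⟨hac, hch'⟩ := List.isChain_cons_cons.mp hch
      have hca : c = !a := by cases a <;> cases c <;> simp_all
      have h1 : (a :: c :: t).count b = t.count b + 1 := by
        subst hca; cases a <;> cases b <;> simp [List.count_cons]
      have h2 : (a :: c :: t).count (!b) = t.count (!b) + 1 := by
        subst hca; cases a <;> cases b <;> simp [List.count_cons]
      have ht : t.count (!b) < t.count b := by omega
      obtain ⟨hh, hl⟩ := alt_head_last t hch'.tail b ht
      obtain ⟨x, t', rfl⟩ : ∃ x t', t = x :: t' := by
        cases t with
        | nil => simp at hh
        | cons x t' => exact ⟨x, t', rfl⟩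
      have hx : x = b := by simpa using hh
      have hcx : c ≠ x := (List.isChain_cons_cons.mp hch').1
      have hab : a = b := by cases a <;> cases b <;> simp_all
      subst hab
      refine ⟨by simp, ?_⟩
      simpa [List.getLast?_cons_cons] using hl

private theorem alt_even : ∀ (bs : List Bool), bs.Chain' (· ≠ ·) →
    ∀ a b : Bool, bs.head? = some a → bs.getLast? = some b → a ≠ b → Even bs.length
  | [], _, a, b, ha, _, _ => by simp at ha
  | [x], _, a, b, ha, hb, hab => by
      simp at ha hb; exact absurd (ha.symm.trans hb) hab
  | x :: y :: t, hch, a, b, ha, hb, hab => by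
      obtain ⟨hxy, hch'⟩ := List.isChain_cons_cons.mp hch
      cases t with
      | nil => simp
      | cons z t' =>
        obtain ⟨hyz, hch''⟩ := List.isChain_cons_cons.mp hch'
        have hax : a = x := by simpa using ha.symm
        have hzx : z = x := by cases x <;> cases y <;> cases z <;> simp_all
        have hlast : (z :: t').getLast? = some b := by
          simpa [List.getLast?_cons_cons] using hb
        have := alt_even (z :: t') hch'' z b (by simp) hlast (by rw [hzx, ← hax]; exact hab)
        rw [Nat.even_iff] at this ⊢
        simp only [List.length_cons] at this ⊢
        omega

private theorem getLast?_cons_of_ne_nil {α : Type*} (a : α) {l : List α} (h : l ≠ []) :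
    (a :: l).getLast? = l.getLast? := by
  cases l with
  | nil => exact absurd rfl h
  | cons b t => exact List.getLast?_cons_cons

section WalkAux
variable {V : Type*} {G : SimpleGraph V}

private theorem walk_edges_getElem {u v : V} (w : G.Walk u v) :
    ∀ i (h : i < w.edges.length), w.edges[i] = s(w.getVert i, w.getVert (i + 1)) := by
  induction w with
  | nil => intro i h; simp at h
  | cons h p ih =>
    intro i hi
    cases i with
    | zero => simp [Walk.getVert_cons_succ]
    | succ n =>
      simp only [Walk.edges_cons, Walk.getVert_cons_succ, List.getElem_cons_succ]
      exact ih n (by simpa [Walk.edges_cons] using hi)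

private theorem edge_at_endpoint {u v : V} (w : G.Walk u v) :
    w.IsPath → ∀ e ∈ w.edges, u ∈ e → e = s(u, w.getVert 1) := by
  induction w with
  | nil => simp
  | cons h p ih =>
    intro hp e he hu
    rw [Walk.edges_cons, List.mem_cons] at he
    rcases he with rfl | he'
    · rw [Walk.getVert_cons_succ, Walk.getVert_zero]
    · exfalso
      obtain ⟨y, rfl⟩ := Sym2.mem_iff_exists.mp hu
      exact (Walk.cons_isPath_iff _ _ |>.mp hp).2 (p.fst_mem_support_of_mem_edges he')

private theorem interior_two_edges {u v : V} (w : G.Walk u v) :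
    w.IsPath → ∀ x, x ∈ w.support → x ≠ u → x ≠ v →
      ∃ e f, e ∈ w.edges ∧ f ∈ w.edges ∧ e ≠ f ∧ x ∈ e ∧ x ∈ f := by
  induction w with
  | nil => intro _ x hx hxu _; simp at hx; exact absurd hx hxu
  | cons h p ih =>
    rename_i a b c
    intro hp x hx hxu hxv
    rw [Walk.support_cons, List.mem_cons] at hx
    rcases hx with rfl | hx
    · exact absurd rfl hxu
    obtain ⟨hp', hans⟩ := Walk.cons_isPath_iff _ _ |>.mp hp
    by_cases hxb : x = b
    · subst hxb
      cases p with
      | nil => exact absurd rfl hxv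
      | cons h2 q =>
        rename_i z
        refine ⟨s(a, x), s(x, z), by simp, by simp, ?_, by simp, by simp⟩
        intro hcon
        rw [Sym2.eq_iff] at hcon
        rcases hcon with ⟨rfl, rfl⟩ | ⟨rfl, -⟩
        · exact hxu rfl
        · exact hans (by simp [Walk.support_cons, q.start_mem_support])
    · obtain ⟨e, f, he, hf, hef, hxe, hxf⟩ := ih hp' x hx hxb hxv
      exact ⟨e, f, by simp [he], by simp [hf], hef, hxe, hxf⟩

private theorem crossing {S : Set V} : ∀ {a z : V} (w : G.Walk a z), a ∈ S → z ∉ S →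
    ∃ x y, G.Adj x y ∧ x ∈ S ∧ y ∉ S := by
  intro a z w
  induction w with
  | nil => intro h1 h2; exact absurd h1 h2
  | cons h p ih =>
    intro h1 h2
    by_cases hb : p.getVert 0 ∈ S
    · exact ih (by rwa [Walk.getVert_zero] at hb) h2
    · exact ⟨_, _, h, h1, by rwa [Walk.getVert_zero] at hb⟩

end WalkAux

/-- A walk alternates with respect to `M` if consecutive edges differ in their
membership in `M` (equivalently, edges of `M Δ N` alternate between `M` and
`N`). -/
def WalkAlternates {V : Type*} [DecidableEq V] {G : SimpleGraph V} {u v : V}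
    (M : Finset (Sym2 V)) (w : G.Walk u v) : Prop :=
  ∀ i, ∀ hi : i + 1 < w.edges.length,
    (w.edges[i]'(by omega) ∈ M ↔ w.edges[i + 1]'hi ∉ M)

/-- Components of the symmetric difference of two matchings are alternating
paths or even alternating cycles; if `|N| > |M|` some component yields an
`M`-augmenting path containing more `N`-edges than `M`-edges. -/
theorem matching_symmDiff_components
    {V : Type*} [Fintype V] [DecidableEq V]
    (G : SimpleGraph V) (hbip : G.Colorable 2)
    (M N : Finset (Sym2 V))
    (hM : (∀ e ∈ M, e ∈ G.edgeSet) ∧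
      ∀ e ∈ M, ∀ f ∈ M, e ≠ f → ∀ v : V, v ∈ e → v ∉ f)
    (hN : (∀ e ∈ N, e ∈ G.edgeSet) ∧
      ∀ e ∈ N, ∀ f ∈ N, e ≠ f → ∀ v : V, v ∈ e → v ∉ f) :
    -- the graph on the edge set `M Δ N`
    let GD : SimpleGraph V := SimpleGraph.fromEdgeSet (↑(symmDiff M N))
    -- every connected component is an alternating path or an even
    -- alternating cycle
    (∀ c : GD.ConnectedComponent,
      (∃ (u v : V) (w : GD.Walk u v),
        GD.connectedComponentMk u = c ∧ w.IsPath ∧ WalkAlternates M w ∧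
        ∀ e : Sym2 V, e ∈ w.edges ↔
          (e ∈ symmDiff M N ∧ ∀ x ∈ e, GD.connectedComponentMk x = c)) ∨
      (∃ (u : V) (w : GD.Walk u u),
        GD.connectedComponentMk u = c ∧ w.IsCycle ∧ Even w.length ∧
        WalkAlternates M w ∧
        ∀ e : Sym2 V, e ∈ w.edges ↔
          (e ∈ symmDiff M N ∧ ∀ x ∈ e, GD.connectedComponentMk x = c))) ∧
    -- consequence: an `M`-augmenting path exists when `|N| > |M|`
    (M.card < N.card →
      ∃ (u v : V) (w : GD.Walk u v),
        w.IsPath ∧ WalkAlternates M w ∧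
        (w.edges.filter (fun e => e ∈ M)).length <
          (w.edges.filter (fun e => e ∈ N)).length ∧
        (¬ ∃ e ∈ M, u ∈ e) ∧ (¬ ∃ e ∈ M, v ∈ e)) := by
  intro GD
  classical
  have hrep : ∀ e : Sym2 V, ∃ x y, e = s(x, y) :=
    fun e => Sym2.inductionOn e fun x y => ⟨x, y, rfl⟩
  have hGDadj : ∀ x y : V, GD.Adj x y ↔ s(x, y) ∈ symmDiff M N ∧ x ≠ y := by
    intro x y
    constructor
    · intro h
      have h' := (SimpleGraph.fromEdgeSet_adj _).mp h
      exact ⟨by exact_mod_cast h'.1, h'.2⟩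
    · intro ⟨h1, h2⟩
      exact (SimpleGraph.fromEdgeSet_adj _).mpr ⟨by exact_mod_cast h1, h2⟩
  have hnd : ∀ e ∈ symmDiff M N, ¬ e.IsDiag := by
    intro e he
    rw [Finset.mem_symmDiff] at he
    rcases he with ⟨h1, -⟩ | ⟨h1, -⟩
    · exact G.not_isDiag_of_mem_edgeSet (hM.1 e h1)
    · exact G.not_isDiag_of_mem_edgeSet (hN.1 e h1)
  have hedgeS : ∀ {x y : V} (w : GD.Walk x y) (e : Sym2 V),
      e ∈ w.edges → e ∈ symmDiff M N := by
    intro x y w e he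
    have h2 := w.edges_subset_edgeSet he
    rw [SimpleGraph.edgeSet_fromEdgeSet] at h2
    exact_mod_cast h2.1
  have hL1 : ∀ e f : Sym2 V, e ∈ symmDiff M N → f ∈ symmDiff M N → e ≠ f →
      ∀ x, x ∈ e → x ∈ f → (e ∈ M ↔ f ∉ M) := by
    intro e f he hf hef x hxe hxf
    rw [Finset.mem_symmDiff] at he hf
    constructor
    · intro heM hfM
      exact hM.2 e heM f hfM hef x hxe hxf
    · intro hfM
      by_contra heM
      have heN : e ∈ N := by tauto
      have hfN : f ∈ N := by tauto
      exact hN.2 e heN f hfN hef x hxe hxf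
  have hdeg2 : ∀ e f g : Sym2 V, e ∈ symmDiff M N → f ∈ symmDiff M N → g ∈ symmDiff M N →
      e ≠ f → e ≠ g → f ≠ g → ∀ x, x ∈ e → x ∈ f → x ∈ g → False := by
    intro e f g he hf hg hef heg hfg x hxe hxf hxg
    have h1 := hL1 e f he hf hef x hxe hxf
    have h2 := hL1 e g he hg heg x hxe hxg
    have h3 := hL1 f g hf hg hfg x hxf hxg
    tauto
  have hAlt : ∀ {x y : V} (w : GD.Walk x y), w.IsTrail → WalkAlternates M w := by
    intro x y w hw i hi
    have h1 : w.edges[i]'(by omega) ∈ symmDiff M N := hedgeS w _ (List.getElem_mem _)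
    have h2 : w.edges[i + 1]'hi ∈ symmDiff M N := hedgeS w _ (List.getElem_mem _)
    have hne : w.edges[i]'(by omega) ≠ w.edges[i + 1]'hi := by
      intro hcon
      have := (hw.edges_nodup.getElem_inj_iff).mp hcon
      omega
    have hv1 : w.getVert (i + 1) ∈ w.edges[i]'(by omega) := by
      rw [walk_edges_getElem w i (by omega)]
      exact Sym2.mem_mk_right _ _
    have hv2 : w.getVert (i + 1) ∈ w.edges[i + 1]'hi := by
      rw [walk_edges_getElem w (i + 1) hi]
      exact Sym2.mem_mk_left _ _
    exact hL1 _ _ h1 h2 hne _ hv1 hv2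
  have hchain : ∀ {x y : V} (w : GD.Walk x y), WalkAlternates M w →
      (w.edges.map (fun e => decide (e ∈ M))).Chain' (· ≠ ·) := by
    intro x y w hwa
    apply List.isChain_iff_getElem.mpr
    intro i hlen
    simp only [List.length_map] at hlen
    simp only [List.get_eq_getElem, List.getElem_map]
    have := hwa i (by omega)
    intro hcon
    rw [decide_eq_decide] at hcon
    tauto
  have hcount : ∀ l : List (Sym2 V), (∀ e ∈ l, e ∈ symmDiff M N) →
      (l.filter (fun e => e ∈ M)).length = (l.map (fun e => decide (e ∈ M))).count true ∧
      (l.filter (fun e => e ∈ N)).length = (l.map (fun e => decide (e ∈ M))).count false := by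
    intro l hl
    constructor
    · rw [List.count, List.countP_map, ← List.countP_eq_length_filter]
      apply List.countP_congr
      intro e he
      simp
    · rw [List.count, List.countP_map, ← List.countP_eq_length_filter]
      apply List.countP_congr
      intro e he
      have := hl e he
      rw [Finset.mem_symmDiff] at this
      simp only [Function.comp_apply, beq_iff_eq, decide_eq_false_iff_not, decide_eq_true_eq]
      constructor
      · intro h; tauto
      · intro h; tauto
  -- the main per-component structure theorem
  have key : ∀ c : GD.ConnectedComponent,
      (∃ (u v : V) (w : GD.Walk u v),
        GD.connectedComponentMk u = c ∧ w.IsPath ∧ WalkAlternates M w ∧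
        ∀ e : Sym2 V, e ∈ w.edges ↔
          (e ∈ symmDiff M N ∧ ∀ x ∈ e, GD.connectedComponentMk x = c)) ∨
      (∃ (u : V) (w : GD.Walk u u),
        GD.connectedComponentMk u = c ∧ w.IsCycle ∧ Even w.length ∧
        WalkAlternates M w ∧
        (∀ e : Sym2 V, e ∈ w.edges ↔
          (e ∈ symmDiff M N ∧ ∀ x ∈ e, GD.connectedComponentMk x = c)) ∧
        ¬((w.edges.filter (fun e => e ∈ M)).length <
            (w.edges.filter (fun e => e ∈ N)).length)) := by
    intro c
    set P : ℕ → Prop := fun n => ∃ (a b : V) (w : GD.Walk a b),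
      w.IsPath ∧ GD.connectedComponentMk a = c ∧ w.length = n with hPdef
    have hout : GD.connectedComponentMk (Quot.out c) = c := Quot.out_eq c
    have hP0 : P 0 := ⟨Quot.out c, Quot.out c, Walk.nil, Walk.IsPath.nil, hout, rfl⟩
    have hbound : ∀ n, P n → n ≤ Fintype.card V := by
      rintro n ⟨a, b, w, hw, -, rfl⟩
      exact hw.length_lt.le
    have hnmaxP : P (Nat.findGreatest P (Fintype.card V)) :=
      Nat.findGreatest_spec (Nat.zero_le _) hP0
    have hmax : ∀ (a b : V) (w : GD.Walk a b), w.IsPath → GD.connectedComponentMk a = c →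
        w.length ≤ Nat.findGreatest P (Fintype.card V) := by
      intro a b w hw hc
      exact Nat.le_findGreatest (hbound _ ⟨a, b, w, hw, hc, rfl⟩) ⟨a, b, w, hw, hc, rfl⟩
    obtain ⟨u, v, w, hw, hcu, hlen⟩ := hnmaxP
    have hmax' : ∀ (a b : V) (w' : GD.Walk a b), w'.IsPath → GD.connectedComponentMk a = c →
        w'.length ≤ w.length := by
      intro a b w' h1 h2
      rw [hlen]
      exact hmax a b w' h1 h2
    have hcv : GD.connectedComponentMk v = c := by
      rw [← hcu]
      exact ConnectedComponent.sound w.reverse.reachable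
    have hKu : ∀ y, GD.Adj u y → y ∈ w.support := by
      intro y hy
      by_contra hns
      have hp2 : (Walk.cons hy.symm w).IsPath := (Walk.cons_isPath_iff _ _).mpr ⟨hw, hns⟩
      have hcy : GD.connectedComponentMk y = c := by
        rw [← hcu]
        exact ConnectedComponent.connectedComponentMk_eq_of_adj hy.symm
      have := hmax' _ _ _ hp2 hcy
      simp [Walk.length_cons] at this
    have hKv : ∀ y, GD.Adj v y → y ∈ w.support := by
      intro y hy
      by_contra hns
      have hns' : y ∉ w.reverse.support := by rwa [Walk.support_reverse, List.mem_reverse]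
      have hp2 : (Walk.cons hy.symm w.reverse).IsPath :=
        (Walk.cons_isPath_iff _ _).mpr ⟨hw.reverse, hns'⟩
      have hcy : GD.connectedComponentMk y = c :=
        (ConnectedComponent.connectedComponentMk_eq_of_adj hy.symm).trans hcv
      have := hmax' _ _ _ hp2 hcy
      simp [Walk.length_cons, Walk.length_reverse] at this
    have hsupp2 : ∀ z, z ∈ w.support → GD.connectedComponentMk z = c := by
      intro z hz
      rw [← hcu]
      exact ConnectedComponent.sound (w.takeUntil z hz).reverse.reachable
    have hsupp1 : ∀ z, GD.connectedComponentMk z = c → z ∈ w.support := by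
      intro z hz
      by_contra hns
      obtain ⟨p⟩ := ConnectedComponent.exact (hcu.trans hz.symm)
      obtain ⟨x, y, hxy, hxS, hyS⟩ :=
        crossing (S := {t | t ∈ w.support}) p w.start_mem_support hns
      by_cases hxu : x = u
      · subst hxu; exact hyS (hKu y hxy)
      by_cases hxv : x = v
      · subst hxv; exact hyS (hKv y hxy)
      obtain ⟨e, f, he, hf, hef, hxe, hxf⟩ := interior_two_edges w hw x hxS hxu hxv
      have hg : s(x, y) ∈ symmDiff M N := ((hGDadj x y).mp hxy).1
      have hge : s(x, y) ∉ w.edges := fun hcon => hyS (w.snd_mem_support_of_mem_edges hcon)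
      exact hdeg2 e f s(x, y) (hedgeS w e he) (hedgeS w f hf) hg hef
        (fun h => hge (h ▸ he)) (fun h => hge (h ▸ hf)) x hxe hxf (Sym2.mem_mk_left x y)
    have hinter : ∀ x, x ∈ w.support → x ≠ u → x ≠ v →
        ∀ g, g ∈ symmDiff M N → x ∈ g → g ∈ w.edges := by
      intro x hx hxu hxv g hg hxg
      by_contra hgn
      obtain ⟨e, f, he, hf, hef, hxe, hxf⟩ := interior_two_edges w hw x hx hxu hxv
      exact hdeg2 e f g (hedgeS w e he) (hedgeS w f hf) hg hef
        (fun h => hgn (h ▸ he)) (fun h => hgn (h ▸ hf)) x hxe hxf hxg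
    have hendu : ∀ g, g ∈ symmDiff M N → u ∈ g → g ∈ w.edges ∨ g = s(u, v) := by
      intro g hg hug
      obtain ⟨t, rfl⟩ := Sym2.mem_iff_exists.mp hug
      have hut : u ≠ t := fun h => hnd _ hg (Sym2.mk_isDiag_iff.mpr h)
      have hadj : GD.Adj u t := (hGDadj u t).mpr ⟨hg, hut⟩
      have htS : t ∈ w.support := hKu t hadj
      by_cases htv : t = v
      · right; rw [htv]
      · left; exact hinter t htS (fun h => hut h.symm) htv _ hg (Sym2.mem_mk_right u t)
    have hendv : ∀ g, g ∈ symmDiff M N → v ∈ g → g ∈ w.edges ∨ g = s(u, v) := by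
      intro g hg hvg
      obtain ⟨t, rfl⟩ := Sym2.mem_iff_exists.mp hvg
      have hvt : v ≠ t := fun h => hnd _ hg (Sym2.mk_isDiag_iff.mpr h)
      have hadj : GD.Adj v t := (hGDadj v t).mpr ⟨hg, hvt⟩
      have htS : t ∈ w.support := hKv t hadj
      by_cases htu : t = u
      · right; rw [htu, Sym2.eq_swap]
      · left; exact hinter t htS htu (fun h => hvt h.symm) _ hg (Sym2.mem_mk_right v t)
    have hcharF : ∀ e, e ∈ w.edges →
        e ∈ symmDiff M N ∧ ∀ x ∈ e, GD.connectedComponentMk x = c := by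
      intro e he
      refine ⟨hedgeS w e he, ?_⟩
      intro x hx
      obtain ⟨y, rfl⟩ := Sym2.mem_iff_exists.mp hx
      exact hsupp2 x (w.fst_mem_support_of_mem_edges he)
    have hcharB : ∀ e, e ∈ symmDiff M N → (∀ x ∈ e, GD.connectedComponentMk x = c) →
        e ∈ w.edges ∨ e = s(u, v) := by
      intro e he hec
      obtain ⟨x, y, rfl⟩ := hrep e
      have hx : x ∈ w.support := hsupp1 x (hec x (Sym2.mem_mk_left x y))
      by_cases hxu : x = u
      · subst hxu; exact hendu _ he (Sym2.mem_mk_left _ _)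
      by_cases hxv : x = v
      · subst hxv; exact hendv _ he (Sym2.mem_mk_left _ _)
      · left; exact hinter x hx hxu hxv _ he (Sym2.mem_mk_left _ _)
    by_cases hclose : GD.Adj u v ∧ s(u, v) ∉ w.edges
    · -- cycle case
      obtain ⟨hadj, hnot⟩ := hclose
      have huv : u ≠ v := hadj.ne
      have hlen1 : 1 ≤ w.length := by
        rcases Nat.eq_zero_or_pos w.length with h0 | h1
        · exact absurd (Walk.eq_of_length_eq_zero h0) huv
        · exact h1
      have hEln : w.edges.length = w.length := w.length_edges
      have hWne : w.edges ≠ [] := by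
        intro h
        rw [h] at hEln
        simp at hEln
        omega
      have he0 : w.edges.head hWne = s(u, w.getVert 1) := by
        rw [List.head_eq_getElem]
        rw [walk_edges_getElem w 0 (by omega)]
        rw [w.getVert_zero]
      have he0mem : w.edges.head hWne ∈ w.edges := List.head_mem hWne
      have hlen2 : 2 ≤ w.length := by
        by_contra hcon
        have hl1 : w.length = 1 := by omega
        apply hnot
        have hgl : w.getVert 1 = v := by
          rw [← hl1]
          exact w.getVert_length
        rw [hgl] at he0
        exact he0 ▸ he0mem
      set wc : GD.Walk u u := Walk.cons hadj w.reverse with hwc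
      have hwcE : wc.edges = s(u, v) :: w.edges.reverse := by
        rw [hwc, Walk.edges_cons, Walk.edges_reverse]
      have hcyc : wc.IsCycle := by
        rw [hwc]
        apply (Walk.cons_isCycle_iff _ _).mpr
        refine ⟨hw.reverse, ?_⟩
        rwa [Walk.edges_reverse, List.mem_reverse]
      have htrail : wc.IsTrail := hcyc.isCircuit.isTrail
      have hwcmem : ∀ e, e ∈ wc.edges ↔ (e = s(u, v) ∨ e ∈ w.edges) := by
        intro e
        rw [hwcE]
        simp [List.mem_reverse]
      have hchar : ∀ e : Sym2 V, e ∈ wc.edges ↔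
          (e ∈ symmDiff M N ∧ ∀ x ∈ e, GD.connectedComponentMk x = c) := by
        intro e
        rw [hwcmem]
        constructor
        · rintro (rfl | he)
          · refine ⟨((hGDadj u v).mp hadj).1, ?_⟩
            intro x hx
            rcases Sym2.mem_iff.mp hx with rfl | rfl
            · exact hcu
            · exact hcv
          · exact hcharF e he
        · rintro ⟨h1, h2⟩
          exact (hcharB e h1 h2).symm
      -- first and last edges of the cycle
      have hsuv : s(u, v) ∈ symmDiff M N := ((hGDadj u v).mp hadj).1
      have he0S : w.edges.head hWne ∈ symmDiff M N := hedgeS w _ he0mem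
      have hne0 : s(u, v) ≠ w.edges.head hWne := fun h => hnot (h ▸ he0mem)
      have hL1' : (s(u, v) ∈ M ↔ w.edges.head hWne ∉ M) :=
        hL1 _ _ hsuv he0S hne0 u (Sym2.mem_mk_left _ _) (by rw [he0]; exact Sym2.mem_mk_left _ _)
      set bs : List Bool := wc.edges.map (fun e => decide (e ∈ M)) with hbs
      have hch : bs.Chain' (· ≠ ·) := hchain wc (hAlt wc htrail)
      have hhead : bs.head? = some (decide (s(u, v) ∈ M)) := by
        rw [hbs, hwcE]
        simp
      have hlastw : wc.edges.getLast? = some (w.edges.head hWne) := by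
        rw [hwcE, getLast?_cons_of_ne_nil _ (by simpa using hWne), List.getLast?_reverse]
        exact List.head?_eq_head hWne
      have hlast : bs.getLast? = some (decide (w.edges.head hWne ∈ M)) := by
        rw [hbs, List.getLast?_map, hlastw]
        rfl
      have hdiff : decide (s(u, v) ∈ M) ≠ decide (w.edges.head hWne ∈ M) := by
        rw [Ne, decide_eq_decide]
        tauto
      have heven : Even wc.length := by
        have := alt_even bs hch _ _ hhead hlast hdiff
        rwa [hbs, List.length_map, wc.length_edges] at this
      have hnocnt : ¬((wc.edges.filter (fun e => e ∈ M)).length <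
          (wc.edges.filter (fun e => e ∈ N)).length) := by
        intro hcnt
        obtain ⟨hc1, hc2⟩ := hcount wc.edges (fun e he => hedgeS wc e he)
        rw [hc1, hc2] at hcnt
        have := alt_head_last bs hch false (by simpa using hcnt)
        rw [hhead, hlast] at this
        obtain ⟨hh', hl'⟩ := this
        simp only [Option.some_inj] at hh' hl'
        rw [hh'] at hdiff
        rw [hl'] at hdiff
        exact hdiff rfl
      exact Or.inr ⟨u, wc, hcu, hcyc, heven, hAlt wc htrail, hchar, hnocnt⟩
    · -- path case
      refine Or.inl ⟨u, v, w, hcu, hw, hAlt w hw.isTrail, ?_⟩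
      intro e
      constructor
      · exact hcharF e
      · rintro ⟨h1, h2⟩
        rcases hcharB e h1 h2 with he | rfl
        · exact he
        · have huv : u ≠ v := fun h => hnd _ h1 (Sym2.mk_isDiag_iff.mpr h)
          have hadj : GD.Adj u v := (hGDadj u v).mpr ⟨h1, huv⟩
          by_contra hne
          exact hclose ⟨hadj, hne⟩
  constructor
  · intro c
    rcases key c with h | ⟨u, w, h1, h2, h3, h4, h5, -⟩
    · exact Or.inl h
    · exact Or.inr ⟨u, w, h1, h2, h3, h4, h5⟩
  · -- augmenting path
    intro hMN
    have key2 : ∀ c : GD.ConnectedComponent, ∃ (a b : V) (w' : GD.Walk a b),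
        GD.connectedComponentMk a = c ∧ w'.IsTrail ∧ WalkAlternates M w' ∧
        (∀ e : Sym2 V, e ∈ w'.edges ↔
          (e ∈ symmDiff M N ∧ ∀ x ∈ e, GD.connectedComponentMk x = c)) ∧
        (w'.IsPath ∨ ¬((w'.edges.filter (fun e => e ∈ M)).length <
            (w'.edges.filter (fun e => e ∈ N)).length)) := by
      intro c
      rcases key c with ⟨u, v, w, h1, h2, h3, h4⟩ | ⟨u, w, h1, h2, h3, h4, h5, h6⟩
      · exact ⟨u, v, w, h1, h2.isTrail, h3, h4, Or.inl h2⟩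
      · exact ⟨u, u, w, h1, h2.isCircuit.isTrail, h4, h5, Or.inr h6⟩
    choose fu fv fw hcf htr halt hchar hpc using key2
    set Ec : GD.ConnectedComponent → Finset (Sym2 V) := fun c => (fw c).edges.toFinset
      with hEc
    set comps : Finset GD.ConnectedComponent := Finset.univ.image GD.connectedComponentMk
      with hcomps
    have hmemEc : ∀ c e, e ∈ Ec c ↔
        (e ∈ symmDiff M N ∧ ∀ x ∈ e, GD.connectedComponentMk x = c) := by
      intro c e
      rw [hEc]
      rw [List.mem_toFinset]
      exact hchar c e
    have hSbi : symmDiff M N = comps.biUnion Ec := by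
      ext e
      simp only [Finset.mem_biUnion]
      constructor
      · intro he
        obtain ⟨x, y, rfl⟩ := hrep e
        refine ⟨GD.connectedComponentMk x,
          Finset.mem_image_of_mem _ (Finset.mem_univ x), ?_⟩
        rw [hmemEc]
        refine ⟨he, ?_⟩
        intro t ht
        rcases Sym2.mem_iff.mp ht with rfl | rfl
        · rfl
        · have hxy : x ≠ t := fun h => hnd _ he (Sym2.mk_isDiag_iff.mpr h)
          exact (ConnectedComponent.connectedComponentMk_eq_of_adj ((hGDadj x t).mpr ⟨he, hxy⟩)).symm
      · rintro ⟨c, -, hec⟩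
        exact ((hmemEc c _).mp hec).1
    have hdisj : ∀ c ∈ comps, ∀ c' ∈ comps, c ≠ c' → Disjoint (Ec c) (Ec c') := by
      intro c _ c' _ hne
      rw [Finset.disjoint_left]
      intro e hea heb
      obtain ⟨-, h2⟩ := (hmemEc c e).mp hea
      obtain ⟨-, h2'⟩ := (hmemEc c' e).mp heb
      obtain ⟨x, y, rfl⟩ := hrep e
      exact hne ((h2 x (Sym2.mem_mk_left _ _)).symm.trans (h2' x (Sym2.mem_mk_left _ _)))
    have hsum : ∀ (K : Finset (Sym2 V)),
        ((symmDiff M N).filter (fun e => e ∈ K)).card =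
          ∑ c ∈ comps, ((Ec c).filter (fun e => e ∈ K)).card := by
      intro K
      rw [hSbi, Finset.filter_biUnion, Finset.card_biUnion]
      intro c hc c' hc' hne
      exact Finset.disjoint_filter_filter (hdisj c hc c' hc' hne)
    have hMN' : ((symmDiff M N).filter (fun e => e ∈ M)).card <
        ((symmDiff M N).filter (fun e => e ∈ N)).card := by
      have h1 : (symmDiff M N).filter (fun e => e ∈ M) = M \ N := by
        ext e
        simp only [Finset.mem_filter, Finset.mem_symmDiff, Finset.mem_sdiff]
        tauto
      have h2 : (symmDiff M N).filter (fun e => e ∈ N) = N \ M := by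
        ext e
        simp only [Finset.mem_filter, Finset.mem_symmDiff, Finset.mem_sdiff]
        tauto
      rw [h1, h2]
      have hA := Finset.card_sdiff_add_card_inter M N
      have hB := Finset.card_sdiff_add_card_inter N M
      rw [Finset.inter_comm] at hB
      omega
    have hsumlt : ∑ c ∈ comps, ((Ec c).filter (fun e => e ∈ M)).card <
        ∑ c ∈ comps, ((Ec c).filter (fun e => e ∈ N)).card := by
      rw [← hsum M, ← hsum N]
      exact hMN'
    obtain ⟨c, -, hcard⟩ := Finset.exists_lt_of_sum_lt hsumlt
    have hnodup : (fw c).edges.Nodup := (htr c).edges_nodup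
    have hconv : ∀ (K : Finset (Sym2 V)),
        ((Ec c).filter (fun e => e ∈ K)).card =
          ((fw c).edges.filter (fun e => e ∈ K)).length := by
      intro K
      have h1 : (Ec c).filter (fun e => e ∈ K) =
          ((fw c).edges.filter (fun e => e ∈ K)).toFinset := by
        ext e
        simp [hEc, List.mem_filter]
      rw [h1, List.toFinset_card_of_nodup (hnodup.filter _)]
    have hcard' : ((fw c).edges.filter (fun e => e ∈ M)).length <
        ((fw c).edges.filter (fun e => e ∈ N)).length := by
      rw [← hconv M, ← hconv N]
      exact hcard
    have hpath : (fw c).IsPath := by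
      rcases hpc c with h | h
      · exact h
      · exact absurd hcard' h
    -- endpoints are unmatched
    set w : GD.Walk (fu c) (fv c) := fw c with hwdef
    set bs : List Bool := w.edges.map (fun e => decide (e ∈ M)) with hbs
    have hch : bs.Chain' (· ≠ ·) := hchain w (halt c)
    obtain ⟨hc1, hc2⟩ := hcount w.edges (fun e he => ((hchar c e).mp he).1)
    have hcnt : bs.count true < bs.count false := by
      rw [← hc1, ← hc2]
      exact hcard'
    obtain ⟨hh, hl⟩ := alt_head_last bs hch false (by simpa using hcnt)
    have hWne : w.edges ≠ [] := by
      intro h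
      rw [hbs, h] at hcnt
      simp at hcnt
    have hEln : w.edges.length = w.length := w.length_edges
    have hlen1 : 1 ≤ w.length := by
      have := List.length_pos_iff.mpr hWne
      omega
    have he0 : w.edges.head hWne = s(fu c, w.getVert 1) := by
      rw [List.head_eq_getElem, walk_edges_getElem w 0 (by omega), w.getVert_zero]
    have he0mem : w.edges.head hWne ∈ w.edges := List.head_mem hWne
    have he0M : w.edges.head hWne ∉ M := by
      have hx : bs.head? = some (decide (w.edges.head hWne ∈ M)) := by
        rw [hbs, List.head?_map, List.head?_eq_head hWne]
        rfl
      rw [hx] at hh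
      simpa using hh
    have helast : w.edges.getLast hWne =
        s(w.getVert (w.length - 1), w.getVert w.length) := by
      have h1 : w.edges.length - 1 < w.edges.length := by omega
      rw [List.getLast_eq_getElem, walk_edges_getElem w (w.edges.length - 1) h1, hEln,
        Nat.sub_add_cancel hlen1]
    have helmem : w.edges.getLast hWne ∈ w.edges := List.getLast_mem hWne
    have helv : fv c ∈ w.edges.getLast hWne := by
      rw [helast, w.getVert_length]
      exact Sym2.mem_mk_right _ _
    have helM : w.edges.getLast hWne ∉ M := by
      have : bs.getLast? = some (decide (w.edges.getLast hWne ∈ M)) := by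
        rw [hbs, List.getLast?_map, List.getLast?_eq_getLast hWne]
        rfl
      rw [this] at hl
      simpa using hl
    have he0u : fu c ∈ w.edges.head hWne := by
      rw [he0]
      exact Sym2.mem_mk_left _ _
    have hcvv : GD.connectedComponentMk (fv c) = c :=
      (ConnectedComponent.sound w.reverse.reachable).trans (hcf c)
    refine ⟨fu c, fv c, w, hpath, halt c, hcard', ?_, ?_⟩
    · rintro ⟨e, heM, hue⟩
      have hne0 : e ≠ w.edges.head hWne := fun h => he0M (h ▸ heM)
      by_cases heN : e ∈ N
      · have he0S : w.edges.head hWne ∈ symmDiff M N := hedgeS w _ he0mem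
        have he0N : w.edges.head hWne ∈ N := by
          rw [Finset.mem_symmDiff] at he0S
          tauto
        exact hN.2 e heN _ he0N hne0 _ hue he0u
      · have heS : e ∈ symmDiff M N := Finset.mem_symmDiff.mpr (Or.inl ⟨heM, heN⟩)
        have hemem : e ∈ w.edges := by
          rw [hchar c e]
          refine ⟨heS, ?_⟩
          obtain ⟨yy, rfl⟩ := Sym2.mem_iff_exists.mp hue
          intro t ht
          rcases Sym2.mem_iff.mp ht with rfl | rfl
          · exact hcf c
          · have hneq : fu c ≠ t := fun h => hnd _ heS (Sym2.mk_isDiag_iff.mpr h)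
            have : GD.Adj (fu c) t := (hGDadj _ t).mpr ⟨heS, hneq⟩
            rw [← hcf c]
            exact (ConnectedComponent.connectedComponentMk_eq_of_adj this).symm
        have hform := edge_at_endpoint w hpath e hemem hue
        rw [← he0] at hform
        exact hne0 hform
    · rintro ⟨e, heM, hve⟩
      have hneL : e ≠ w.edges.getLast hWne := fun h => helM (h ▸ heM)
      by_cases heN : e ∈ N
      · have helS : w.edges.getLast hWne ∈ symmDiff M N := hedgeS w _ helmem
        have helN : w.edges.getLast hWne ∈ N := by
          rw [Finset.mem_symmDiff] at helS
          tauto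
        exact hN.2 e heN _ helN hneL _ hve helv
      · have heS : e ∈ symmDiff M N := Finset.mem_symmDiff.mpr (Or.inl ⟨heM, heN⟩)
        have hemem : e ∈ w.edges := by
          rw [hchar c e]
          refine ⟨heS, ?_⟩
          obtain ⟨yy, rfl⟩ := Sym2.mem_iff_exists.mp hve
          intro t ht
          rcases Sym2.mem_iff.mp ht with rfl | rfl
          · exact hcvv
          · have hneq : fv c ≠ t := fun h => hnd _ heS (Sym2.mk_isDiag_iff.mpr h)
            have : GD.Adj (fv c) t := (hGDadj _ t).mpr ⟨heS, hneq⟩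
            rw [← hcvv]
            exact (ConnectedComponent.connectedComponentMk_eq_of_adj this).symm
        have hmemrev : e ∈ w.reverse.edges := by
          rwa [Walk.edges_reverse, List.mem_reverse]
        have hmemrev' : w.edges.getLast hWne ∈ w.reverse.edges := by
          rw [Walk.edges_reverse, List.mem_reverse]
          exact helmem
        have hform := edge_at_endpoint w.reverse hpath.reverse e hmemrev hve
        have hform' := edge_at_endpoint w.reverse hpath.reverse _ hmemrev' helv
        exact hneL (hform.trans hform'.symm)
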